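/- Let G be a group generated by a finite set S, with word length |g| (the least n such that g is a product of n elements of S ∪ S⁻¹, with |e| = 0), let z be an element of the center of G, and let τ : G → ℂ be a homomorphism into the additive group of complex numbers. For α > 0 define the norm ‖x‖*_α = Σ_{g∈G} |x(g)|·e^{−α|g|} on ℂ[G]. Then for all sufficiently large α > 0, the central derivation d^τ_z (the linear map with d^τ_z(δ_g) = τ(g)·δ_{gz}) is bounded from the supremum norm to ‖·‖*_α: there exist α₀ > 0 and, for each α ≥ α₀, a constant M such that ‖d^τ_z(x)‖*_α ≤ M·‖x‖_s for all x ∈ ℂ[G]. -/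

import Mathlib

/-- The supremum norm on the group ring `ℂ[G]`. -/
noncomputable def supNorm {G : Type*} [Group G] (x : MonoidAlgebra ℂ G) : ℝ :=
  ⨆ g, ‖x.coeff g‖

/-- The word length of `g ∈ G` with respect to a generating set `S`: the least `n` such
that `g` is a product of `n` elements of `S ∪ S⁻¹` (with the identity having length 0). -/
noncomputable def wordLength {G : Type*} [Group G] (S : Finset G) (g : G) : ℕ :=
  sInf {n : ℕ | ∃ l : List G, l.length = n ∧ (∀ s ∈ l, s ∈ S ∨ s⁻¹ ∈ S) ∧ l.prod = g}

/-- The weighted norm `‖x‖*_α = Σ_g |x g| e^(-α |g|)` on the group ring `ℂ[G]`. -/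
noncomputable def weightedNorm {G : Type*} [Group G] (S : Finset G) (α : ℝ)
    (x : MonoidAlgebra ℂ G) : ℝ :=
  ∑ g ∈ x.coeff.support, ‖x.coeff g‖ * Real.exp (-α * (wordLength S g : ℝ))

section Aux

variable {G : Type*} [Group G]

lemma wordLength_set_nonempty (S : Finset G) (hS : Subgroup.closure (S : Set G) = ⊤) (g : G) :
    {n : ℕ | ∃ l : List G, l.length = n ∧ (∀ s ∈ l, s ∈ S ∨ s⁻¹ ∈ S) ∧ l.prod = g}.Nonempty := by
  have hg : g ∈ (Subgroup.closure (S : Set G)).toSubmonoid := by rw [hS]; trivial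
  rw [Subgroup.closure_toSubmonoid] at hg
  obtain ⟨l, hl, hprod⟩ := Submonoid.exists_list_of_mem_closure hg
  refine ⟨l.length, l, rfl, ?_, hprod⟩
  intro s hs
  rcases hl s hs with h | h
  · exact Or.inl h
  · exact Or.inr (by simpa using h)

lemma exists_wordLength_list (S : Finset G) (hS : Subgroup.closure (S : Set G) = ⊤) (g : G) :
    ∃ l : List G, l.length = wordLength S g ∧ (∀ s ∈ l, s ∈ S ∨ s⁻¹ ∈ S) ∧ l.prod = g :=
  Nat.sInf_mem (wordLength_set_nonempty S hS g)

lemma wordLength_le_length (S : Finset G) {g : G} {l : List G}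
    (hl : ∀ s ∈ l, s ∈ S ∨ s⁻¹ ∈ S) (hp : l.prod = g) : wordLength S g ≤ l.length :=
  Nat.sInf_le ⟨l, rfl, hl, hp⟩

lemma wordLength_mul_le (S : Finset G) (hS : Subgroup.closure (S : Set G) = ⊤) (a b : G) :
    wordLength S (a * b) ≤ wordLength S a + wordLength S b := by
  obtain ⟨la, h1a, h2a, h3a⟩ := exists_wordLength_list S hS a
  obtain ⟨lb, h1b, h2b, h3b⟩ := exists_wordLength_list S hS b
  have := wordLength_le_length S (l := la ++ lb) (g := a * b)
    (by intro s hs; rcases List.mem_append.1 hs with h | h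
        exacts [h2a s h, h2b s h])
    (by rw [List.prod_append, h3a, h3b])
  simpa [List.length_append, h1a, h1b] using this

lemma tau_one (τ : G → ℂ) (hτ : ∀ g h : G, τ (g * h) = τ g + τ h) : τ 1 = 0 := by
  have := hτ 1 1
  rw [one_mul] at this
  exact (left_eq_add.1 this)

lemma tau_inv (τ : G → ℂ) (hτ : ∀ g h : G, τ (g * h) = τ g + τ h) (s : G) :
    τ s⁻¹ = -τ s := by
  have := hτ s s⁻¹
  rw [mul_inv_cancel, tau_one τ hτ] at this
  linear_combination -this

lemma abs_tau_prod_le (τ : G → ℂ) (hτ : ∀ g h : G, τ (g * h) = τ g + τ h) (S : Finset G) :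
    ∀ l : List G, (∀ s ∈ l, s ∈ S ∨ s⁻¹ ∈ S) →
      ‖τ l.prod‖ ≤ l.length * ∑ s ∈ S, ‖τ s‖ := by
  intro l
  induction l with
  | nil => simp [tau_one τ hτ]
  | cons a l ih =>
    intro h
    rw [List.prod_cons, hτ]
    have ha : ‖τ a‖ ≤ ∑ s ∈ S, ‖τ s‖ := by
      rcases h a (List.mem_cons_self) with h' | h'
      · exact Finset.single_le_sum (fun s _ => norm_nonneg _) h'
      · have heq : ‖τ a‖ = ‖τ a⁻¹‖ := by
          rw [tau_inv τ hτ]; simp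
        rw [heq]
        exact Finset.single_le_sum (fun s _ => norm_nonneg _) h'
    have hl := ih fun s hs => h s (List.mem_cons_of_mem a hs)
    calc ‖τ a + τ l.prod‖ ≤ ‖τ a‖ + ‖τ l.prod‖ :=
          norm_add_le _ _
      _ ≤ (∑ s ∈ S, ‖τ s‖) + l.length * ∑ s ∈ S, ‖τ s‖ :=
          add_le_add ha hl
      _ = (a :: l).length * ∑ s ∈ S, ‖τ s‖ := by
          simp [List.length_cons]; ring

lemma abs_tau_le (τ : G → ℂ) (hτ : ∀ g h : G, τ (g * h) = τ g + τ h)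
    (S : Finset G) (hS : Subgroup.closure (S : Set G) = ⊤) (g : G) :
    ‖τ g‖ ≤ (wordLength S g : ℝ) * ∑ s ∈ S, ‖τ s‖ := by
  obtain ⟨l, h1, h2, h3⟩ := exists_wordLength_list S hS g
  have := abs_tau_prod_le τ hτ S l h2
  rwa [h3, h1] at this

lemma fiber_card_le [DecidableEq G] (S : Finset G) (hS : Subgroup.closure (S : Set G) = ⊤)
    (F : Finset G) (n : ℕ) :
    (F.filter fun g => wordLength S g = n).card ≤ (S ∪ S.image (·⁻¹)).card ^ n := by
  classical
  set T := S ∪ S.image (·⁻¹) with hT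
  set lst : G → List G := fun g => (exists_wordLength_list S hS g).choose with hlst
  have hspec : ∀ g : G, (lst g).length = wordLength S g ∧
      (∀ s ∈ lst g, s ∈ S ∨ s⁻¹ ∈ S) ∧ (lst g).prod = g :=
    fun g => (exists_wordLength_list S hS g).choose_spec
  have hlen : ∀ g ∈ F.filter fun g => wordLength S g = n, (lst g).length = n := by
    intro g hg
    rw [(hspec g).1]
    exact (Finset.mem_filter.1 hg).2
  have hcard := Finset.card_le_card_of_injOn
      (s := F.filter fun g => wordLength S g = n)
      (f := fun g (i : Fin n) => (lst g).getD i 1)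
      (t := Fintype.piFinset fun _ : Fin n => T) ?_ ?_
  · calc (F.filter fun g => wordLength S g = n).card
        ≤ (Fintype.piFinset fun _ : Fin n => T).card := hcard
      _ = T.card ^ n := by
          rw [Fintype.card_piFinset]
          simp
  · intro g hg
    rw [Finset.mem_coe, Fintype.mem_piFinset]
    intro i
    have hi : (i : ℕ) < (lst g).length := by rw [hlen g hg]; exact i.isLt
    show (lst g).getD (↑i) 1 ∈ T
    rw [List.getD_eq_getElem _ _ hi]
    rcases (hspec g).2.1 _ (List.getElem_mem hi) with h | h
    · exact Finset.mem_union_left _ h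
    · exact Finset.mem_union_right _ (Finset.mem_image.2 ⟨_, h, inv_inv _⟩)
  · intro g hg g' hg' heq
    have hll : lst g = lst g' := by
      apply List.ext_getElem (by rw [hlen g hg, hlen g' hg'])
      intro i h1 h2
      have hi : i < n := by rw [← hlen g hg]; exact h1
      have h5 : (lst g).getD i 1 = (lst g').getD i 1 := congrFun heq ⟨i, hi⟩
      rw [List.getD_eq_getElem _ _ h1, List.getD_eq_getElem _ _ h2] at h5
      exact h5
    rw [← (hspec g).2.2, ← (hspec g').2.2, hll]

lemma sum_wl_le [DecidableEq G] (S : Finset G) (hS : Subgroup.closure (S : Set G) = ⊤) {α : ℝ}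
    (hα : Real.log (((S ∪ S.image (·⁻¹)).card : ℝ) + 2) ≤ α) (F : Finset G) :
    ∑ g ∈ F, (wordLength S g : ℝ) * Real.exp (-α * (wordLength S g : ℝ))
      ≤ ∑' n : ℕ, (n : ℝ) * (((S ∪ S.image (·⁻¹)).card : ℝ) * Real.exp (-α)) ^ n := by
  classical
  set m : ℝ := ((S ∪ S.image (·⁻¹)).card : ℝ) with hm
  have hm0 : (0 : ℝ) ≤ m := Nat.cast_nonneg _
  set r : ℝ := m * Real.exp (-α) with hrdef
  have hr0 : 0 ≤ r := mul_nonneg hm0 (Real.exp_pos _).le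
  have hr1 : r < 1 := by
    have h1 : Real.exp (-α) ≤ Real.exp (-Real.log (m + 2)) := Real.exp_le_exp.2 (by linarith)
    have h2 : Real.exp (-Real.log (m + 2)) = (m + 2)⁻¹ := by
      rw [Real.exp_neg, Real.exp_log (by linarith)]
    have h3 : r ≤ m * (m + 2)⁻¹ :=
      mul_le_mul_of_nonneg_left (h1.trans_eq h2) hm0
    have h4 : m * (m + 2)⁻¹ < 1 := by
      rw [← div_eq_mul_inv]
      exact (div_lt_one (by linarith)).2 (by linarith)
    linarith
  have hsum : Summable fun n : ℕ => (n : ℝ) * r ^ n := by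
    have := summable_pow_mul_geometric_of_norm_lt_one (R := ℝ) 1
      (r := r) (by rwa [Real.norm_eq_abs, abs_of_nonneg hr0])
    simpa using this
  calc ∑ g ∈ F, (wordLength S g : ℝ) * Real.exp (-α * (wordLength S g : ℝ))
      = ∑ n ∈ F.image (wordLength S),
          (F.filter fun g => wordLength S g = n).card •
            ((n : ℝ) * Real.exp (-α * (n : ℝ))) :=
        Finset.sum_comp (fun n : ℕ => (n : ℝ) * Real.exp (-α * (n : ℝ))) (wordLength S)
    _ ≤ ∑ n ∈ F.image (wordLength S), (n : ℝ) * r ^ n := by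
        refine Finset.sum_le_sum fun n _ => ?_
        rw [nsmul_eq_mul]
        have hc : ((F.filter fun g => wordLength S g = n).card : ℝ) ≤ m ^ n := by
          rw [hm, ← Nat.cast_pow]
          exact_mod_cast fiber_card_le S hS F n
        have hnn : 0 ≤ (n : ℝ) * Real.exp (-α * (n : ℝ)) :=
          mul_nonneg (Nat.cast_nonneg _) (Real.exp_pos _).le
        calc ((F.filter fun g => wordLength S g = n).card : ℝ) *
              ((n : ℝ) * Real.exp (-α * (n : ℝ)))
            ≤ m ^ n * ((n : ℝ) * Real.exp (-α * (n : ℝ))) :=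
              mul_le_mul_of_nonneg_right hc hnn
          _ = (n : ℝ) * r ^ n := by
              have he : Real.exp (-α * (n : ℝ)) = Real.exp (-α) ^ n := by
                rw [mul_comm, Real.exp_nat_mul]
              rw [he, hrdef, mul_pow]; ring
    _ ≤ ∑' n : ℕ, (n : ℝ) * r ^ n :=
        hsum.sum_le_tsum _ (fun n _ => mul_nonneg (Nat.cast_nonneg _) (pow_nonneg hr0 n))

end Aux

/-- Let `G` be generated by a finite set `S`, let `z` be central and `τ : G → (ℂ,+)` an
additive homomorphism. For all sufficiently large `α > 0`, the central derivation `d`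
(determined by `d(δ_g) = τ(g)•δ_{gz}`) is bounded from the supremum norm to the weighted
norm `‖·‖*_α`. -/
theorem central_derivation_bounded_weighted_norm
    (G : Type*) [Group G] (S : Finset G) (hS : Subgroup.closure (S : Set G) = ⊤)
    (z : G) (hz : z ∈ Subgroup.center G)
    (τ : G → ℂ) (hτ : ∀ g h : G, τ (g * h) = τ g + τ h)
    (d : MonoidAlgebra ℂ G →ₗ[ℂ] MonoidAlgebra ℂ G)
    (hd : ∀ g : G, d (MonoidAlgebra.single g (1 : ℂ)) =
      τ g • MonoidAlgebra.single (g * z) (1 : ℂ)) :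
    ∃ α₀ : ℝ, 0 < α₀ ∧ ∀ α : ℝ, α₀ ≤ α →
      ∃ M : ℝ, ∀ x : MonoidAlgebra ℂ G, weightedNorm S α (d x) ≤ M * supNorm x := by
  classical
  set m : ℝ := ((S ∪ S.image (·⁻¹)).card : ℝ) with hm
  have hm0 : (0 : ℝ) ≤ m := Nat.cast_nonneg _
  have hlogpos : 0 < Real.log (m + 2) := Real.log_pos (by linarith)
  refine ⟨Real.log (m + 2), hlogpos, ?_⟩
  intro α hα
  have hα0 : 0 ≤ α := le_trans hlogpos.le hα
  set C : ℝ := ∑ s ∈ S, ‖τ s‖ with hC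
  have hC0 : 0 ≤ C := Finset.sum_nonneg fun s _ => norm_nonneg _
  set K : ℝ := Real.exp (α * (wordLength S z⁻¹ : ℝ)) with hK
  have hK0 : 0 ≤ K := (Real.exp_pos _).le
  set c : ℝ := ∑' n : ℕ, (n : ℝ) * (m * Real.exp (-α)) ^ n with hc
  have hc0 : 0 ≤ c :=
    tsum_nonneg fun n => mul_nonneg (Nat.cast_nonneg _)
      (pow_nonneg (mul_nonneg hm0 (Real.exp_pos _).le) n)
  refine ⟨C * K * c, ?_⟩
  intro x
  -- supNorm facts
  have hbdd : BddAbove (Set.range fun g : G => ‖x.coeff g‖) := by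
    apply Set.Finite.bddAbove
    apply Set.Finite.subset (Finset.finite_toSet (insert (0 : ℝ) (x.coeff.frange.image norm)))
    rintro y ⟨g, rfl⟩
    by_cases h : x.coeff g = 0
    · simp [h]
    · simp only [Finset.coe_insert, Set.mem_insert_iff, Finset.mem_coe, Finset.mem_image]
      exact Or.inr ⟨x.coeff g, Finsupp.mem_frange.2 ⟨h, g, rfl⟩, rfl⟩
  have hsup : ∀ g : G, ‖x.coeff g‖ ≤ supNorm x := fun g => le_ciSup hbdd g
  have hsup0 : 0 ≤ supNorm x := le_trans (norm_nonneg _) (hsup 1)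
  -- representation of d x
  have hdx : d x = ∑ g ∈ x.coeff.support, MonoidAlgebra.single (g * z) (x.coeff g * τ g) := by
    have hx : x = ∑ g ∈ x.coeff.support, MonoidAlgebra.single g (x.coeff g) := by
      conv_lhs => rw [← MonoidAlgebra.sum_coeff_single x]
      rfl
    calc d x = ∑ g ∈ x.coeff.support, d (MonoidAlgebra.single g (x.coeff g)) := by
          rw [← map_sum]; exact congrArg d hx
      _ = ∑ g ∈ x.coeff.support, MonoidAlgebra.single (g * z) (x.coeff g * τ g) := by
          refine Finset.sum_congr rfl fun g hg => ?_
          have h1 : MonoidAlgebra.single g (x.coeff g) = x.coeff g • MonoidAlgebra.single g (1 : ℂ) := by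
            rw [MonoidAlgebra.smul_single', mul_one]
          rw [h1, map_smul, hd, smul_smul, MonoidAlgebra.smul_single', mul_one]
  have happ : ∀ h : G, (d x).coeff h = ∑ g ∈ x.coeff.support, (MonoidAlgebra.single (g * z) (x.coeff g * τ g)).coeff h := by
    intro h; rw [hdx, MonoidAlgebra.coeff_sum]; exact Finset.sum_apply' h
  have hsub : (d x).coeff.support ⊆ x.coeff.support.image (· * z) := by
    intro h hh
    rw [Finsupp.mem_support_iff, happ] at hh
    obtain ⟨g, hg, hne⟩ := Finset.exists_ne_zero_of_sum_ne_zero hh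
    refine Finset.mem_image.2 ⟨g, hg, ?_⟩
    by_contra hcon
    rw [MonoidAlgebra.single_apply, if_neg hcon] at hne
    exact hne rfl
  have hval : ∀ g ∈ x.coeff.support, (d x).coeff (g * z) = x.coeff g * τ g := by
    intro g hg
    rw [happ, Finset.sum_eq_single_of_mem g hg]
    · rw [MonoidAlgebra.single_apply, if_pos rfl]
    · intro b hb hbg
      rw [MonoidAlgebra.single_apply, if_neg]
      exact fun hEq => hbg (mul_right_cancel hEq)
  -- the exponential comparison
  have hexp : ∀ g : G, Real.exp (-α * (wordLength S (g * z) : ℝ)) ≤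
      K * Real.exp (-α * (wordLength S g : ℝ)) := by
    intro g
    rw [hK, ← Real.exp_add]
    apply Real.exp_le_exp.2
    have hw : (wordLength S g : ℝ) ≤ (wordLength S (g * z) : ℝ) + (wordLength S z⁻¹ : ℝ) := by
      have h := wordLength_mul_le S hS (g * z) z⁻¹
      rw [mul_inv_cancel_right] at h
      exact_mod_cast h
    nlinarith [mul_le_mul_of_nonneg_left hw hα0]
  -- main estimate
  calc weightedNorm S α (d x)
      ≤ ∑ h ∈ x.coeff.support.image (· * z),
          ‖(d x).coeff h‖ * Real.exp (-α * (wordLength S h : ℝ)) := by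
        unfold weightedNorm
        exact Finset.sum_le_sum_of_subset_of_nonneg hsub fun h _ _ =>
          mul_nonneg (norm_nonneg _) (Real.exp_pos _).le
    _ = ∑ g ∈ x.coeff.support,
          ‖(d x).coeff (g * z)‖ * Real.exp (-α * (wordLength S (g * z) : ℝ)) :=
        Finset.sum_image fun a _ b _ h => mul_right_cancel h
    _ ≤ ∑ g ∈ x.coeff.support, supNorm x *
          (C * (wordLength S g : ℝ) * (K * Real.exp (-α * (wordLength S g : ℝ)))) := by
        refine Finset.sum_le_sum fun g hg => ?_
        rw [hval g hg, norm_mul]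
        have ht : ‖τ g‖ ≤ C * (wordLength S g : ℝ) := by
          rw [hC, mul_comm]; exact abs_tau_le τ hτ S hS g
        calc ‖x.coeff g‖ * ‖τ g‖ *
              Real.exp (-α * (wordLength S (g * z) : ℝ))
            ≤ supNorm x * (C * (wordLength S g : ℝ)) *
              (K * Real.exp (-α * (wordLength S g : ℝ))) := by
              apply mul_le_mul
              · exact mul_le_mul (hsup g) ht (norm_nonneg _) hsup0
              · exact hexp g
              · exact (Real.exp_pos _).le
              · exact mul_nonneg hsup0 (mul_nonneg hC0 (Nat.cast_nonneg _))
          _ = supNorm x *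
              (C * (wordLength S g : ℝ) * (K * Real.exp (-α * (wordLength S g : ℝ)))) := by
              ring
    _ = supNorm x * C * K *
          ∑ g ∈ x.coeff.support, (wordLength S g : ℝ) * Real.exp (-α * (wordLength S g : ℝ)) := by
        rw [Finset.mul_sum]
        exact Finset.sum_congr rfl fun g _ => by ring
    _ ≤ supNorm x * C * K * c := by
        refine mul_le_mul_of_nonneg_left ?_
          (mul_nonneg (mul_nonneg hsup0 hC0) hK0)
        rw [hc]
        exact sum_wl_le S hS hα x.coeff.support
    _ = C * K * c * supNorm x := by ring
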